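/- Let d ≥ 1, let A ⊆ ℝ^d be open, and let v : ℝ^d → ℝ be integrable with finite total variation on A. Then TV(v, A) = TV⁺(v, A), where TV(v, A) := sup { ∫_A v · div p : p ∈ C¹_c(A; ℝ^d), |p(x)| ≤ 1 for all x } and TV⁺(v, A) := sup { ∫_A v · (div p − div q) : p, q ∈ C¹_c(A; ℝ^d), p and q have all components nonnegative, and |p(x)|² + |q(x)|² ≤ 1 for all x }. That is, the total variation may equivalently be computed using pairs of componentwise-nonnegative dual test fields. -/

import Mathlib

set_option maxHeartbeats 1000000

open MeasureTheory Set Filter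
open scoped ENNReal Manifold RealInnerProductSpace

noncomputable section

/-- The divergence `∑ i ∂ᵢ pᵢ` of a vector field `p : ℝ^d → ℝ^d`. -/
def vdiv {d : ℕ} (p : EuclideanSpace ℝ (Fin d) → EuclideanSpace ℝ (Fin d))
    (x : EuclideanSpace ℝ (Fin d)) : ℝ :=
  ∑ i, fderiv ℝ p x (EuclideanSpace.single i 1) i

/-- The total variation `TV(v, A)` of `v` on an open set `A`, defined by duality against
`C¹` compactly supported vector fields with values in the unit ball. -/
def TV {d : ℕ} (v : EuclideanSpace ℝ (Fin d) → ℝ) (A : Set (EuclideanSpace ℝ (Fin d))) : ℝ≥0∞ :=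
  ⨆ p : {p : EuclideanSpace ℝ (Fin d) → EuclideanSpace ℝ (Fin d) //
      ContDiff ℝ 1 p ∧ HasCompactSupport p ∧ tsupport p ⊆ A ∧ ∀ x, ‖p x‖ ≤ 1},
    ENNReal.ofReal (∫ x in A, v x * vdiv p.1 x)

/-- The total variation computed with pairs of componentwise-nonnegative dual fields. -/
def TVplus {d : ℕ} (v : EuclideanSpace ℝ (Fin d) → ℝ)
    (A : Set (EuclideanSpace ℝ (Fin d))) : ℝ≥0∞ :=
  ⨆ pq : {pq : (EuclideanSpace ℝ (Fin d) → EuclideanSpace ℝ (Fin d)) ×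
      (EuclideanSpace ℝ (Fin d) → EuclideanSpace ℝ (Fin d)) //
      ContDiff ℝ 1 pq.1 ∧ ContDiff ℝ 1 pq.2 ∧
      HasCompactSupport pq.1 ∧ HasCompactSupport pq.2 ∧
      tsupport pq.1 ⊆ A ∧ tsupport pq.2 ⊆ A ∧
      (∀ x i, 0 ≤ pq.1 x i) ∧ (∀ x i, 0 ≤ pq.2 x i) ∧
      ∀ x, ‖pq.1 x‖ ^ 2 + ‖pq.2 x‖ ^ 2 ≤ 1},
    ENNReal.ofReal (∫ x in A, v x * (vdiv pq.1.1 x - vdiv pq.1.2 x))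

lemma my_vdiv_add {d : ℕ} {p q : EuclideanSpace ℝ (Fin d) → EuclideanSpace ℝ (Fin d)}
    {x : EuclideanSpace ℝ (Fin d)} (hp : DifferentiableAt ℝ p x) (hq : DifferentiableAt ℝ q x) :
    vdiv (p + q) x = vdiv p x + vdiv q x := by
  unfold vdiv
  rw [show p + q = fun y => p y + q y from rfl, fderiv_fun_add hp hq, ← Finset.sum_add_distrib]
  simp [ContinuousLinearMap.add_apply]

lemma my_vdiv_sub {d : ℕ} {p q : EuclideanSpace ℝ (Fin d) → EuclideanSpace ℝ (Fin d)}
    {x : EuclideanSpace ℝ (Fin d)} (hp : DifferentiableAt ℝ p x) (hq : DifferentiableAt ℝ q x) :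
    vdiv (p - q) x = vdiv p x - vdiv q x := by
  unfold vdiv
  rw [show p - q = fun y => p y - q y from rfl, fderiv_fun_sub hp hq, ← Finset.sum_sub_distrib]
  simp [ContinuousLinearMap.sub_apply]

lemma my_vdiv_smul {d : ℕ} {p : EuclideanSpace ℝ (Fin d) → EuclideanSpace ℝ (Fin d)}
    {x : EuclideanSpace ℝ (Fin d)} (hp : DifferentiableAt ℝ p x) (t : ℝ) :
    vdiv (t • p) x = t * vdiv p x := by
  unfold vdiv
  rw [show t • p = fun y => t • p y from rfl, fderiv_fun_const_smul hp t, Finset.mul_sum]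
  simp [ContinuousLinearMap.smul_apply]

lemma my_cutoff {d : ℕ} {K A : Set (EuclideanSpace ℝ (Fin d))} (hK : IsCompact K)
    (hA : IsOpen A) (hKA : K ⊆ A) :
    ∃ χ : EuclideanSpace ℝ (Fin d) → ℝ, ContDiff ℝ 1 χ ∧ HasCompactSupport χ ∧
      tsupport χ ⊆ A ∧ Set.EqOn χ 1 K ∧ ∀ x, χ x ∈ Set.Icc (0:ℝ) 1 := by
  obtain ⟨L, L_comp, hKL, hLA⟩ := exists_compact_between hK hA hKA
  obtain ⟨f, hf0, hf1, hf01⟩ := exists_contMDiffMap_zero_one_of_isClosed (n := ⊤)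
    (𝓘(ℝ, EuclideanSpace ℝ (Fin d))) (isOpen_interior (s := L)).isClosed_compl hK.isClosed
    (disjoint_compl_left_iff_subset.2 hKL)
  have hsupp : tsupport f ⊆ L := by
    apply (closure_minimal ?_ L_comp.isClosed)
    intro x hx
    by_contra hxL
    exact hx (hf0 fun hxi => hxL (interior_subset hxi))
  refine ⟨f, ?_, ?_, hsupp.trans hLA, hf1, hf01⟩
  · exact (contMDiff_iff_contDiff.1 f.contMDiff).of_le (by exact_mod_cast le_top)
  · exact L_comp.of_isClosed_subset (isClosed_tsupport _) hsupp

lemma my_normsq {d : ℕ} (y : EuclideanSpace ℝ (Fin d)) : ‖y‖ ^ 2 = ∑ i, (y i) ^ 2 := by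
  rw [EuclideanSpace.norm_eq, Real.sq_sqrt (Finset.sum_nonneg fun i _ => sq_nonneg _)]
  simp [Real.norm_eq_abs, sq_abs]

/-- The hard direction, for a scaled test field. -/
lemma my_key {d : ℕ} (hd : 1 ≤ d) {A : Set (EuclideanSpace ℝ (Fin d))} (hA : IsOpen A)
    (v : EuclideanSpace ℝ (Fin d) → ℝ)
    {p : EuclideanSpace ℝ (Fin d) → EuclideanSpace ℝ (Fin d)}
    (hp : ContDiff ℝ 1 p) (hps : HasCompactSupport p) (hpA : tsupport p ⊆ A)
    (hpn : ∀ x, ‖p x‖ ≤ 1) {t : ℝ} (ht0 : 0 < t) (ht1 : t < 1) :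
    ENNReal.ofReal (t * ∫ x in A, v x * vdiv p x) ≤ TVplus v A := by
  have hdR : (0:ℝ) < d := by exact_mod_cast hd
  set δ : ℝ := Real.sqrt ((1 - t ^ 2) / d) with hδdef
  have hfrac : (0:ℝ) < (1 - t ^ 2) / d := div_pos (by nlinarith) hdR
  have hδ0 : 0 < δ := Real.sqrt_pos.2 hfrac
  have hδ2 : δ ^ 2 = (1 - t ^ 2) / d := Real.sq_sqrt hfrac.le
  set φ : ℝ → ℝ := fun s => (s + Real.sqrt (s ^ 2 + δ ^ 2)) / 2 with hφdef
  have hsq_pos : ∀ s : ℝ, (0:ℝ) < s ^ 2 + δ ^ 2 := fun s => by positivity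
  have φcd : ContDiff ℝ 1 φ := by
    apply ContDiff.div_const
    exact contDiff_id.add (((contDiff_id.pow 2).add contDiff_const).sqrt
      fun s => (hsq_pos s).ne')
  have hroot : ∀ s : ℝ, |s| ≤ Real.sqrt (s ^ 2 + δ ^ 2) := fun s => by
    rw [← Real.sqrt_sq_eq_abs]
    exact Real.sqrt_le_sqrt (by nlinarith)
  have φ0 : ∀ s, 0 ≤ φ s := fun s => by
    have h1 := hroot s
    have h2 := neg_abs_le s
    simp only [hφdef]
    linarith
  have φid : ∀ s, φ (-s) + s = φ s := fun s => by
    simp only [hφdef, neg_sq]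
    ring
  have φsq : ∀ s, φ s ^ 2 + φ (-s) ^ 2 = s ^ 2 + δ ^ 2 / 2 := fun s => by
    have h := Real.sq_sqrt (hsq_pos s).le
    simp only [hφdef, neg_sq]
    nlinarith [h]
  have φzero : φ 0 = δ / 2 := by
    simp only [hφdef]
    rw [show (0:ℝ) ^ 2 + δ ^ 2 = δ ^ 2 by ring, Real.sqrt_sq hδ0.le]
    ring
  obtain ⟨χ, χcd, χcs, χA, χ1, χ01⟩ := my_cutoff hps hA hpA
  set Q : EuclideanSpace ℝ (Fin d) → EuclideanSpace ℝ (Fin d) :=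
    fun x => χ x • (WithLp.equiv 2 (Fin d → ℝ)).symm (fun i => φ (-(t * p x i))) with hQdef
  set P : EuclideanSpace ℝ (Fin d) → EuclideanSpace ℝ (Fin d) := Q + t • p with hPdef
  have hQapp : ∀ x i, Q x i = χ x * φ (-(t * p x i)) := fun x i => by
    simp [hQdef]
  have hPapp : ∀ x i, P x i = χ x * φ (-(t * p x i)) + t * p x i := fun x i => by
    simp [hPdef, hQapp x i]
  have hpicd : ∀ i, ContDiff ℝ 1 fun x => p x i := fun i =>
    (EuclideanSpace.proj (𝕜 := ℝ) i).contDiff.comp hp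
  have hQcd : ContDiff ℝ 1 Q := by
    apply χcd.smul
    exact (PiLp.continuousLinearEquiv 2 ℝ (fun _ : Fin d => ℝ)).symm.contDiff.comp
      (contDiff_pi.2 fun i => φcd.comp ((contDiff_const.mul (hpicd i)).neg))
  have hQcs : HasCompactSupport Q := χcs.smul_right
  have hQA : tsupport Q ⊆ A := (tsupport_smul_subset_left _ _).trans χA
  have hpt_cs : HasCompactSupport (t • p) := hps.mono (by
    intro x hx
    simp only [Function.mem_support, Pi.smul_apply, ne_eq, smul_eq_zero, not_or] at hx
    exact hx.2)
  have hpt_A : tsupport (t • p) ⊆ A :=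
    (closure_mono (Function.support_smul_subset_right _ _)).trans hpA
  have hPcd : ContDiff ℝ 1 P := hQcd.add (hp.const_smul t)
  have hPcs : HasCompactSupport P := hQcs.add hpt_cs
  have hPA : tsupport P ⊆ A := by
    refine (closure_minimal ?_ (isClosed_closure.union isClosed_closure)).trans
      (union_subset hQA hpt_A)
    exact (Function.support_add _ _).trans
      (union_subset_union subset_closure subset_closure)
  have hQnn : ∀ x i, 0 ≤ Q x i := fun x i => by
    rw [hQapp]
    exact mul_nonneg (χ01 x).1 (φ0 _)
  have hPnn : ∀ x i, 0 ≤ P x i := fun x i => by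
    rw [hPapp]
    by_cases hx : x ∈ tsupport p
    · rw [χ1 hx, Pi.one_apply, one_mul]
      rw [φid (t * p x i)]
      exact φ0 _
    · have hp0 : p x = 0 := image_eq_zero_of_notMem_tsupport hx
      have : p x i = 0 := by rw [hp0]; rfl
      rw [this]
      simpa using mul_nonneg (χ01 x).1 (φ0 0)
  have hnorm : ∀ x, ‖P x‖ ^ 2 + ‖Q x‖ ^ 2 ≤ 1 := fun x => by
    rw [my_normsq, my_normsq]
    by_cases hx : x ∈ tsupport p
    · have hχ : χ x = 1 := χ1 hx
      have hsum : ∑ i, P x i ^ 2 + ∑ i, Q x i ^ 2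
          = t ^ 2 * ∑ i, p x i ^ 2 + d * (δ ^ 2 / 2) := by
        rw [← Finset.sum_add_distrib, Finset.mul_sum]
        rw [show (d : ℝ) * (δ ^ 2 / 2) = ∑ _i : Fin d, δ ^ 2 / 2 by
          simp [Finset.sum_const, mul_comm]]
        rw [← Finset.sum_add_distrib]
        refine Finset.sum_congr rfl fun i _ => ?_
        rw [hPapp, hQapp, hχ, one_mul, φid (t * p x i)]
        have := φsq (t * p x i)
        nlinarith [this]
      rw [hsum]
      have hpx : ∑ i, p x i ^ 2 ≤ 1 := by
        rw [← my_normsq]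
        nlinarith [hpn x, norm_nonneg (p x)]
      have hdδ : (d:ℝ) * (δ ^ 2 / 2) = (1 - t ^ 2) / 2 := by
        rw [hδ2]; field_simp
      rw [hdδ]
      nlinarith
    · have hp0 : p x = 0 := image_eq_zero_of_notMem_tsupport hx
      have hpi : ∀ i, p x i = 0 := fun i => by rw [hp0]; rfl
      have hterm : ∀ i, P x i = χ x * (δ / 2) ∧ Q x i = χ x * (δ / 2) := fun i => by
        rw [hPapp, hQapp, hpi i]
        norm_num [φzero]
      have hsum : ∑ i, P x i ^ 2 + ∑ i, Q x i ^ 2 = d * (2 * (χ x * (δ / 2)) ^ 2) := by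
        rw [← Finset.sum_add_distrib]
        rw [show (d : ℝ) * (2 * (χ x * (δ / 2)) ^ 2) = ∑ _i : Fin d, 2 * (χ x * (δ/2)) ^ 2 by
          simp [Finset.sum_const, mul_comm]]
        refine Finset.sum_congr rfl fun i _ => ?_
        rw [(hterm i).1, (hterm i).2]; ring
      rw [hsum]
      have hχ2 : (χ x) ^ 2 ≤ 1 := by nlinarith [(χ01 x).1, (χ01 x).2]
      have : (d:ℝ) * (2 * (χ x * (δ / 2)) ^ 2) ≤ (d:ℝ) * (δ ^ 2 / 2) := by
        apply mul_le_mul_of_nonneg_left _ hdR.le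
        nlinarith [sq_nonneg (δ/2), hχ2, sq_nonneg (χ x), sq_nonneg δ]
      have hdδ : (d:ℝ) * (δ ^ 2 / 2) = (1 - t ^ 2) / 2 := by
        rw [hδ2]; field_simp
      nlinarith
  have hvd : ∀ x, vdiv P x - vdiv Q x = t * vdiv p x := fun x => by
    have h1 : DifferentiableAt ℝ Q x := hQcd.differentiable one_ne_zero x
    have h2 : DifferentiableAt ℝ p x := hp.differentiable one_ne_zero x
    have key : vdiv P x = vdiv Q x + vdiv (t • p) x := my_vdiv_add h1 (h2.const_smul t)
    rw [key, my_vdiv_smul h2 t]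
    ring
  have hint : (∫ x in A, v x * (vdiv P x - vdiv Q x)) = t * ∫ x in A, v x * vdiv p x := by
    rw [show (fun x => v x * (vdiv P x - vdiv Q x)) = fun x => t * (v x * vdiv p x) from
      funext fun x => by rw [hvd x]; ring]
    exact integral_const_mul t _
  calc ENNReal.ofReal (t * ∫ x in A, v x * vdiv p x)
      = ENNReal.ofReal (∫ x in A, v x * (vdiv P x - vdiv Q x)) := by rw [hint]
    _ ≤ TVplus v A := by
        apply le_iSup (fun pq : {pq : _ × _ // _} =>
          ENNReal.ofReal (∫ x in A, v x * (vdiv pq.1.1 x - vdiv pq.1.2 x)))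
          ⟨(P, Q), hPcd, hQcd, hPcs, hQcs, hPA, hQA, hPnn, hQnn, hnorm⟩

theorem stmt_5 {d : ℕ} (hd : 1 ≤ d) (A : Set (EuclideanSpace ℝ (Fin d))) (hA : IsOpen A)
    (v : EuclideanSpace ℝ (Fin d) → ℝ) (hv : Integrable v) (hTV : TV v A < ⊤) :
    TV v A = TVplus v A := by
  apply le_antisymm
  · refine iSup_le fun p => ?_
    obtain ⟨p, hp1, hp2, hp3, hp4⟩ := p
    set I : ℝ := ∫ x in A, v x * vdiv p x with hI
    have hkey : ∀ n : ℕ, ENNReal.ofReal ((1 - 1 / (n + 2 : ℝ)) * I) ≤ TVplus v A := by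
      intro n
      have h2 : (0:ℝ) < (n:ℝ) + 2 := by positivity
      have ht0 : 0 < 1 - 1 / ((n:ℝ) + 2) := by
        rw [sub_pos, div_lt_one h2]
        linarith
      have ht1 : 1 - 1 / ((n:ℝ) + 2) < 1 := by
        have : 0 < 1 / ((n:ℝ) + 2) := by positivity
        linarith
      exact my_key hd hA v hp1 hp2 hp3 hp4 ht0 ht1
    have htend : Tendsto (fun n : ℕ => ENNReal.ofReal ((1 - 1 / (n + 2 : ℝ)) * I)) atTop
        (nhds (ENNReal.ofReal I)) := by
      apply (ENNReal.continuous_ofReal.tendsto I).comp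
      have h1 : Tendsto (fun n : ℕ => ((n:ℝ) + 2)) atTop atTop :=
        tendsto_atTop_add_const_right _ 2 tendsto_natCast_atTop_atTop
      have h2 : Tendsto (fun n : ℕ => 1 / ((n:ℝ) + 2)) atTop (nhds 0) := by
        simpa [one_div, Function.comp_def] using tendsto_inv_atTop_zero.comp h1
      have h3 : Tendsto (fun n : ℕ => 1 - 1 / ((n:ℝ) + 2)) atTop (nhds 1) := by
        simpa using (tendsto_const_nhds (x := (1:ℝ))).sub h2
      simpa using h3.mul (tendsto_const_nhds (x := I))
    exact le_of_tendsto' htend hkey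
  · refine iSup_le fun pq => ?_
    obtain ⟨⟨p, q⟩, h1, h2, h3, h4, h5, h6, h7, h8, h9⟩ := pq
    simp only at h1 h2 h3 h4 h5 h6 h7 h8 h9 ⊢
    set r : EuclideanSpace ℝ (Fin d) → EuclideanSpace ℝ (Fin d) := p - q with hrdef
    have hr1 : ContDiff ℝ 1 r := h1.sub h2
    have hr2 : HasCompactSupport r := by
      have := h3.add h4.neg
      simpa [hrdef, sub_eq_add_neg] using this
    have hr3 : tsupport r ⊆ A := by
      refine (closure_minimal ?_ (isClosed_closure.union isClosed_closure)).trans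
        (union_subset h5 h6)
      refine (Function.support_sub _ _).trans
        (union_subset_union subset_closure subset_closure)
    have hr4 : ∀ x, ‖r x‖ ≤ 1 := fun x => by
      have hin : 0 ≤ ⟪p x, q x⟫ := by
        rw [PiLp.inner_apply]
        exact Finset.sum_nonneg fun i _ => by
          simpa using mul_nonneg (h8 x i) (h7 x i)
      have hsq : ‖r x‖ ^ 2 ≤ 1 := by
        have hns := norm_sub_sq_real (p x) (q x)
        have h9x := h9 x
        have : r x = p x - q x := rfl
        rw [this]
        nlinarith
      nlinarith [norm_nonneg (r x)]
    have hint : ∀ x, v x * (vdiv p x - vdiv q x) = v x * vdiv r x := fun x => by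
      rw [hrdef, my_vdiv_sub (h1.differentiable one_ne_zero x) (h2.differentiable one_ne_zero x)]
    calc ENNReal.ofReal (∫ x in A, v x * (vdiv p x - vdiv q x))
        = ENNReal.ofReal (∫ x in A, v x * vdiv r x) := by
          congr 1
          exact integral_congr_ae (Filter.Eventually.of_forall fun x => hint x)
      _ ≤ TV v A := le_iSup (fun s : {s // _} =>
            ENNReal.ofReal (∫ x in A, v x * vdiv s.1 x)) ⟨r, hr1, hr2, hr3, hr4⟩

end
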